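/- Let B > 0, 0 < a₁ ≤ a₂ and d₁, d₂ ≥ 0 be reals with d₁ + d₂ > 0, and define g′(t) = a₁·(B − (ln 2)·(d₁+d₂)/t)·2^((d₁+d₂)/(B·t)) + (a₂ − a₁)·(B − (ln 2)·d₂/t)·2^(d₂/(B·t)) − a₂·B. Then g′ is strictly increasing on (0, ∞). -/

import Mathlib

/-- `h(x) = (1-x)·eˣ` is strictly decreasing on `[0,∞)`. -/
lemma stmt7_hanti : StrictAntiOn (fun x : ℝ => (1 - x) * Real.exp x) (Set.Ici 0) := by
  apply strictAntiOn_of_deriv_neg (convex_Ici 0)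
  · exact ((continuous_const.sub continuous_id).mul Real.continuous_exp).continuousOn
  · intro x hx
    rw [interior_Ici, Set.mem_Ioi] at hx
    have hd : HasDerivAt (fun x : ℝ => (1 - x) * Real.exp x) (-x * Real.exp x) x := by
      have h1 : HasDerivAt (fun x : ℝ => 1 - x) (-1) x := (hasDerivAt_id x).const_sub 1
      have : HasDerivAt (fun y : ℝ => (1 - y) * Real.exp y) (-1 * Real.exp x + (1 - x) * Real.exp x) x :=
        h1.mul (Real.hasDerivAt_exp x)
      convert this using 1
      ring
    rw [hd.deriv]
    exact mul_neg_of_neg_of_pos (by linarith) (Real.exp_pos x)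

lemma stmt7_key (B : ℝ) (hB : 0 < B) (d u : ℝ) (hu : 0 < u) :
    (B - Real.log 2 * d / u) * (2 : ℝ) ^ (d / (B * u)) =
      B * ((1 - Real.log 2 * d / (B * u)) * Real.exp (Real.log 2 * d / (B * u))) := by
  rw [Real.rpow_def_of_pos (by norm_num : (0:ℝ) < 2)]
  rw [show Real.log 2 * (d / (B * u)) = Real.log 2 * d / (B * u) from by ring]
  rw [show B - Real.log 2 * d / u = B * (1 - Real.log 2 * d / (B * u)) from by
    field_simp]
  ring

/-- the derivative `g′` of the per-group offloading energy is strictly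
increasing on `(0, ∞)`. -/
theorem stmt_7 (B a₁ a₂ d₁ d₂ : ℝ) (hB : 0 < B) (ha₁ : 0 < a₁) (h12 : a₁ ≤ a₂)
    (hd₁ : 0 ≤ d₁) (hd₂ : 0 ≤ d₂) (hdpos : 0 < d₁ + d₂) :
    StrictMonoOn
      (fun t : ℝ =>
        a₁ * (B - Real.log 2 * (d₁ + d₂) / t) * (2 : ℝ) ^ ((d₁ + d₂) / (B * t))
          + (a₂ - a₁) * (B - Real.log 2 * d₂ / t) * (2 : ℝ) ^ (d₂ / (B * t))
          - a₂ * B)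
      (Set.Ioi 0) := by
  intro s hs t ht hst
  rw [Set.mem_Ioi] at hs ht
  have hL : 0 < Real.log 2 := Real.log_pos one_lt_two
  -- the per-term comparison
  have term_lt : ∀ d : ℝ, 0 < d →
      (B - Real.log 2 * d / s) * (2 : ℝ) ^ (d / (B * s)) <
      (B - Real.log 2 * d / t) * (2 : ℝ) ^ (d / (B * t)) := by
    intro d hd
    rw [stmt7_key B hB d s hs, stmt7_key B hB d t ht]
    have hxs : 0 < Real.log 2 * d / (B * s) :=
      div_pos (mul_pos hL hd) (mul_pos hB hs)
    have hxt : 0 < Real.log 2 * d / (B * t) :=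
      div_pos (mul_pos hL hd) (mul_pos hB ht)
    have hlt : Real.log 2 * d / (B * t) < Real.log 2 * d / (B * s) := by
      apply div_lt_div_of_pos_left (mul_pos hL hd) (mul_pos hB hs)
      exact mul_lt_mul_of_pos_left hst hB
    have := stmt7_hanti (le_of_lt hxt) (le_of_lt hxs) hlt
    exact mul_lt_mul_of_pos_left this hB
  have term_le : ∀ d : ℝ, 0 ≤ d →
      (B - Real.log 2 * d / s) * (2 : ℝ) ^ (d / (B * s)) ≤
      (B - Real.log 2 * d / t) * (2 : ℝ) ^ (d / (B * t)) := by
    intro d hd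
    rcases eq_or_lt_of_le hd with h | h
    · simp [← h]
    · exact le_of_lt (term_lt d h)
  simp only
  have h1 := term_lt (d₁ + d₂) hdpos
  have h2 := term_le d₂ hd₂
  have h1' : a₁ * ((B - Real.log 2 * (d₁ + d₂) / s) * (2 : ℝ) ^ ((d₁ + d₂) / (B * s))) <
      a₁ * ((B - Real.log 2 * (d₁ + d₂) / t) * (2 : ℝ) ^ ((d₁ + d₂) / (B * t))) :=
    mul_lt_mul_of_pos_left h1 ha₁
  have h2' : (a₂ - a₁) * ((B - Real.log 2 * d₂ / s) * (2 : ℝ) ^ (d₂ / (B * s))) ≤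
      (a₂ - a₁) * ((B - Real.log 2 * d₂ / t) * (2 : ℝ) ^ (d₂ / (B * t))) :=
    mul_le_mul_of_nonneg_left h2 (by linarith)
  nlinarith [h1', h2']
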